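/- Let X and Y be 4×4 symmetric matrices over ℂ with X invertible. Then the characteristic polynomial of X⁻¹Y has no multiple root if and only if for every nonzero v ∈ ℂ⁴ with vᵀXv = 0 and vᵀYv = 0, the vectors Xv and Yv are linearly independent over ℂ (i.e. the common zero locus S_{(X,Y)} of the two quadrics is smooth away from the origin). -/

import Mathlib

open Matrix Polynomial

section aux

private lemma charpoly_mulVecLin' (M : Matrix (Fin 4) (Fin 4) ℂ) :
    (Matrix.mulVecLin M).charpoly = M.charpoly := by
  rw [← LinearMap.charpoly_toMatrix (Matrix.mulVecLin M) (Pi.basisFun ℂ (Fin 4)),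
    LinearMap.toMatrix_eq_toMatrix']
  congr 1
  rw [← Matrix.toLin'_apply']
  exact LinearMap.toMatrix'_toLin' M

private lemma charpoly_shift' (M : Matrix (Fin 4) (Fin 4) ℂ) (α : ℂ) :
    (M - α • 1).charpoly = M.charpoly.comp (X + C α) := by
  let σ : ℂ[X] →+* ℂ[X] := (Polynomial.aeval (X + C α : ℂ[X])).toRingHom
  have hσ : ∀ p : ℂ[X], σ p = p.comp (X + C α) := fun p => by
    simp [σ, Polynomial.aeval_def, Polynomial.comp]
  rw [Matrix.charpoly, Matrix.charpoly, ← hσ, RingHom.map_det]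
  congr 1
  ext i j
  by_cases h : i = j
  · simp [σ, charmatrix, h, Matrix.sub_apply, Matrix.smul_apply, Matrix.one_apply, map_sub]
    ring
  · simp [σ, charmatrix, h, Matrix.sub_apply, Matrix.smul_apply, Matrix.one_apply, map_sub]

private lemma mulVecLin_shift' (M : Matrix (Fin 4) (Fin 4) ℂ) (α : ℂ) :
    Matrix.mulVecLin (M - α • 1) = Matrix.mulVecLin M - α • 1 := by
  ext v i
  simp [Matrix.sub_mulVec, Matrix.smul_mulVec, Matrix.one_apply, Pi.single_apply, eq_comm]

private lemma mult_eq' (M : Matrix (Fin 4) (Fin 4) ℂ) (α : ℂ) :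
    M.charpoly.rootMultiplicity α
      = Module.finrank ℂ (Module.End.maxGenEigenspace (Matrix.mulVecLin M) α) := by
  have h1 : Module.End.maxGenEigenspace (Matrix.mulVecLin M) α
      = Module.End.maxGenEigenspace (Matrix.mulVecLin M - α • 1) 0 := by
    ext x
    simp [Module.End.mem_maxGenEigenspace]
  rw [h1, ← mulVecLin_shift', LinearMap.finrank_maxGenEigenspace_zero_eq, charpoly_mulVecLin',
    charpoly_shift', Polynomial.rootMultiplicity_eq_natTrailingDegree]

private lemma two_le_mult_iff (M : Matrix (Fin 4) (Fin 4) ℂ) (α : ℂ) :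
    2 ≤ M.charpoly.rootMultiplicity α ↔
      2 ≤ Module.finrank ℂ
        (LinearMap.ker ((Matrix.mulVecLin M - α • 1 : Module.End ℂ (Fin 4 → ℂ)) ^ 2)) := by
  rw [mult_eq']
  set φ : Module.End ℂ (Fin 4 → ℂ) := Matrix.mulVecLin M
  constructor
  · intro h
    by_contra hlt
    push_neg at hlt
    set ψ := φ - α • 1 with hψ
    have hle : LinearMap.ker ψ ≤ LinearMap.ker (ψ ^ 2) := by
      intro x hx
      simp only [LinearMap.mem_ker] at hx ⊢
      rw [pow_two, Module.End.mul_apply, hx, map_zero]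
    have hker : LinearMap.ker (ψ ^ 2) = LinearMap.ker ψ := by
      rcases eq_or_ne (LinearMap.ker ψ) ⊥ with hbot | hne
      · rw [hbot, pow_two]
        rw [LinearMap.ker_eq_bot] at hbot ⊢
        exact hbot.comp hbot
      · have h1 : 1 ≤ Module.finrank ℂ (LinearMap.ker ψ) := by
          rwa [Nat.one_le_iff_ne_zero, ne_eq, Submodule.finrank_eq_zero]
        exact (Submodule.eq_of_le_of_finrank_le hle (by omega)).symm
    have hstab := Module.End.ker_pow_constant
      (f := ψ) (k := 1) (by simpa [pow_one] using hker.symm) 3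
    have hmax : Module.End.maxGenEigenspace φ α = LinearMap.ker ψ := by
      rw [Module.End.maxGenEigenspace_eq_genEigenspace_finrank,
        Module.End.genEigenspace_nat]
      have h4 : Module.finrank ℂ (Fin 4 → ℂ) = 4 := by simp
      rw [h4, ← hψ]
      norm_num at hstab
      rw [← hstab]
    rw [hmax] at h
    have : Module.finrank ℂ (LinearMap.ker ψ) ≤ Module.finrank ℂ (LinearMap.ker (ψ ^ 2)) :=
      Submodule.finrank_mono hle
    omega
  · intro h
    refine le_trans h (Submodule.finrank_mono ?_)
    rw [← Module.End.genEigenspace_nat (k := 2)]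
    exact Module.End.genEigenspace_le_maximal φ α 2

private lemma mem_ker_sq (N : Matrix (Fin 4) (Fin 4) ℂ) (x : Fin 4 → ℂ) :
    x ∈ LinearMap.ker ((Matrix.mulVecLin N) ^ 2) ↔ N *ᵥ (N *ᵥ x) = 0 := by
  simp [pow_two, LinearMap.mem_ker, Module.End.mul_apply]

private lemma two_le_finrank_of_pair {x y : Fin 4 → ℂ} (p : Submodule ℂ (Fin 4 → ℂ))
    (hx : x ∈ p) (hy : y ∈ p) (h : LinearIndependent ℂ ![x, y]) :
    2 ≤ Module.finrank ℂ p := by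
  have hspan : Submodule.span ℂ (Set.range ![x, y]) ≤ p := by
    rw [Submodule.span_le, Set.range_subset_iff]
    intro i
    fin_cases i <;> simpa
  have := finrank_span_eq_card h
  simp only [Fintype.card_fin] at this
  calc 2 = Module.finrank ℂ (Submodule.span ℂ (Set.range ![x, y])) := this.symm
    _ ≤ Module.finrank ℂ p := Submodule.finrank_mono hspan

private lemma exists_pair_of_two_le_finrank (p : Submodule ℂ (Fin 4 → ℂ))
    (h : 2 ≤ Module.finrank ℂ p) :
    ∃ x y : Fin 4 → ℂ, x ∈ p ∧ y ∈ p ∧ LinearIndependent ℂ ![x, y] := by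
  obtain ⟨f, hf⟩ := exists_linearIndependent_of_le_finrank (R := ℂ) (M := p) h
  have hf' : LinearIndependent ℂ (fun i => ((f i : p) : Fin 4 → ℂ)) :=
    hf.map' p.subtype p.ker_subtype
  refine ⟨f 0, f 1, (f 0).2, (f 1).2, ?_⟩
  have : (![((f 0 : p) : Fin 4 → ℂ), (f 1 : p)] : Fin 2 → Fin 4 → ℂ)
      = fun i => ((f i : p) : Fin 4 → ℂ) := by
    ext i j
    fin_cases i <;> rfl
  rw [this]
  exact hf'

/-- move a matrix across a dot product -/
private lemma dot_shift {N S : Matrix (Fin 4) (Fin 4) ℂ} (hNS : Nᵀ * S = S * N)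
    (w z : Fin 4 → ℂ) : (N *ᵥ w) ⬝ᵥ (S *ᵥ z) = w ⬝ᵥ (S *ᵥ (N *ᵥ z)) := by
  rw [← Matrix.vecMul_transpose, ← Matrix.dotProduct_mulVec, Matrix.mulVec_mulVec, hNS,
    ← Matrix.mulVec_mulVec]

private lemma exists_isotropic (S : Matrix (Fin 4) (Fin 4) ℂ) {u w : Fin 4 → ℂ}
    (h : LinearIndependent ℂ ![u, w]) :
    ∃ v : Fin 4 → ℂ, v ≠ 0 ∧ v ⬝ᵥ (S *ᵥ v) = 0 ∧ ∃ a b : ℂ, v = a • u + b • w := by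
  rcases eq_or_ne (w ⬝ᵥ (S *ᵥ w)) 0 with hw | hw
  · exact ⟨w, h.ne_zero 1, hw, 0, 1, by simp⟩
  · set qu := u ⬝ᵥ (S *ᵥ u)
    set qw := w ⬝ᵥ (S *ᵥ w)
    set β := u ⬝ᵥ (S *ᵥ w) + w ⬝ᵥ (S *ᵥ u)
    obtain ⟨s, hs⟩ : ∃ s : ℂ, s ^ 2 = β ^ 2 - 4 * qw * qu :=
      IsAlgClosed.exists_pow_nat_eq (β ^ 2 - 4 * qw * qu) (n := 2) (by norm_num)
    set t := (-β + s) / (2 * qw)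
    refine ⟨u + t • w, ?_, ?_, 1, t, by simp⟩
    · intro h0
      rw [LinearIndependent.pair_iff] at h
      have := h 1 t (by simpa using h0)
      exact one_ne_zero this.1
    · have expand : (u + t • w) ⬝ᵥ (S *ᵥ (u + t • w)) = qu + t * β + t ^ 2 * qw := by
        simp only [Matrix.mulVec_add, Matrix.mulVec_smul, dotProduct_add,
          add_dotProduct, smul_dotProduct, dotProduct_smul,
          smul_eq_mul, qu, qw, β]
        ring
      rw [expand]
      have key : qu + t * β + t ^ 2 * qw = (s ^ 2 - (β ^ 2 - 4 * qw * qu)) / (4 * qw) := by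
        simp only [t]
        field_simp
        ring
      rw [key, hs, sub_self, zero_div]

end aux
private lemma exists_preimage_of_symm (B : Matrix (Fin 4) (Fin 4) ℂ) (hB : Bᵀ = B)
    (v : Fin 4 → ℂ) (hv : v ≠ 0) (hvB : B *ᵥ v = 0)
    (hker : ∀ u, B *ᵥ u = 0 → ∃ c : ℂ, u = c • v)
    (z : Fin 4 → ℂ) (hz : v ⬝ᵥ z = 0) : ∃ w, B *ᵥ w = z := by
  classical
  let l : (Fin 4 → ℂ) →ₗ[ℂ] ℂ :=
    { toFun := fun u => v ⬝ᵥ u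
      map_add' := fun a b => dotProduct_add v a b
      map_smul' := fun c a => by simp [dotProduct_smul] }
  obtain ⟨i, hi⟩ : ∃ i, v i ≠ 0 := by
    by_contra hcon
    push_neg at hcon
    exact hv (funext hcon)
  have hsurj : Function.Surjective l := by
    intro c
    refine ⟨(c / v i) • (Pi.single i 1 : Fin 4 → ℂ), ?_⟩
    show v ⬝ᵥ ((c / v i) • (Pi.single i 1 : Fin 4 → ℂ)) = c
    rw [dotProduct_smul, dotProduct_single, mul_one, smul_eq_mul]
    field_simp
  have hkerl : Module.finrank ℂ (LinearMap.ker l) = 3 := by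
    have h1 := LinearMap.finrank_range_add_finrank_ker l
    rw [LinearMap.range_eq_top.mpr hsurj] at h1
    simp only [finrank_top] at h1
    have h2 : Module.finrank ℂ (Fin 4 → ℂ) = 4 := by simp
    have h3 : Module.finrank ℂ ℂ = 1 := Module.finrank_self ℂ
    omega
  have hkerB : LinearMap.ker (Matrix.mulVecLin B) = Submodule.span ℂ {v} := by
    ext u
    simp only [LinearMap.mem_ker, Matrix.mulVecLin_apply, Submodule.mem_span_singleton]
    constructor
    · intro h
      obtain ⟨c, hc⟩ := hker u h
      exact ⟨c, hc.symm⟩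
    · rintro ⟨c, rfl⟩
      rw [Matrix.mulVec_smul, hvB, smul_zero]
  have hrange : LinearMap.range (Matrix.mulVecLin B) = LinearMap.ker l := by
    have hle : LinearMap.range (Matrix.mulVecLin B) ≤ LinearMap.ker l := by
      rintro _ ⟨w, rfl⟩
      show v ⬝ᵥ (B *ᵥ w) = 0
      rw [Matrix.dotProduct_mulVec, ← hB, Matrix.vecMul_transpose, hvB,
        zero_dotProduct]
    have hrk : Module.finrank ℂ (LinearMap.range (Matrix.mulVecLin B)) = 3 := by
      have h1 := LinearMap.finrank_range_add_finrank_ker (Matrix.mulVecLin B)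
      rw [hkerB, finrank_span_singleton hv] at h1
      have h2 : Module.finrank ℂ (Fin 4 → ℂ) = 4 := by simp
      omega
    exact Submodule.eq_of_le_of_finrank_le hle (by omega)
  have hzmem : z ∈ LinearMap.ker l := hz
  rw [← hrange] at hzmem
  obtain ⟨w, hw⟩ := hzmem
  exact ⟨w, hw⟩


theorem no_multiple_root_iff_smooth (X Y : Matrix (Fin 4) (Fin 4) ℂ)
    (hX : X.IsSymm) (hY : Y.IsSymm) (hXu : IsUnit X.det) :
    (∀ α : ℂ, (X⁻¹ * Y).charpoly.rootMultiplicity α ≤ 1) ↔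
      (∀ v : Fin 4 → ℂ, v ≠ 0 → v ⬝ᵥ (X *ᵥ v) = 0 → v ⬝ᵥ (Y *ᵥ v) = 0 →
        LinearIndependent ℂ ![X *ᵥ v, Y *ᵥ v]) := by
  have hXinv : X⁻¹ * X = 1 := Matrix.nonsing_inv_mul X hXu
  have hXinv' : X * X⁻¹ = 1 := Matrix.mul_nonsing_inv X hXu
  have hXinj : ∀ u : Fin 4 → ℂ, X *ᵥ u = 0 → u = 0 := by
    intro u hu
    have : X⁻¹ *ᵥ (X *ᵥ u) = u := by
      rw [Matrix.mulVec_mulVec, hXinv, Matrix.one_mulVec]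
    rw [← this, hu, Matrix.mulVec_zero]
  set M : Matrix (Fin 4) (Fin 4) ℂ := X⁻¹ * Y with hM
  -- facts depending on α
  have key : ∀ α : ℂ, X * (M - α • 1) = Y - α • X := by
    intro α
    rw [Matrix.mul_sub, hM, ← Matrix.mul_assoc, hXinv', Matrix.one_mul, Matrix.mul_smul,
      Matrix.mul_one]
  have hB : ∀ α : ℂ, (Y - α • X)ᵀ = Y - α • X := by
    intro α
    rw [Matrix.transpose_sub, Matrix.transpose_smul, hX.eq, hY.eq]
  have hNTX : ∀ α : ℂ, (M - α • 1)ᵀ * X = X * (M - α • 1) := by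
    intro α
    have : (X * (M - α • 1))ᵀ = X * (M - α • 1) := by rw [key, hB]
    rw [Matrix.transpose_mul, hX.eq] at this
    exact this
  constructor
  · -- no multiple root → smooth
    intro hmult v hv hq1 hq2
    by_contra hdep
    rw [LinearIndependent.pair_iff] at hdep
    push_neg at hdep
    obtain ⟨a, b, hab, hne⟩ := hdep
    have hXv : X *ᵥ v ≠ 0 := fun h => hv (hXinj v h)
    have hb : b ≠ 0 := by
      rintro rfl
      simp only [zero_smul, add_zero] at hab
      rcases smul_eq_zero.mp hab with ha | h
      · exact (hne ha rfl).elim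
      · exact hXv h
    set α : ℂ := -a / b with hα
    have hYv : Y *ᵥ v = α • (X *ᵥ v) := by
      have h1 : b • (Y *ᵥ v) = -(a • (X *ᵥ v)) := by
        rw [eq_neg_iff_add_eq_zero, add_comm]; exact hab
      calc Y *ᵥ v = b⁻¹ • (b • (Y *ᵥ v)) := by rw [smul_smul, inv_mul_cancel₀ hb, one_smul]
        _ = b⁻¹ • (-(a • (X *ᵥ v))) := by rw [h1]
        _ = α • (X *ᵥ v) := by
            rw [← neg_smul a, smul_smul, hα, div_eq_inv_mul]
    set N : Matrix (Fin 4) (Fin 4) ℂ := M - α • 1 with hN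
    have hNv : N *ᵥ v = 0 := by
      rw [hN, Matrix.sub_mulVec, hM, ← Matrix.mulVec_mulVec, hYv, Matrix.mulVec_smul,
        Matrix.mulVec_mulVec, hXinv, Matrix.one_mulVec, Matrix.smul_mulVec,
        Matrix.one_mulVec, sub_self]
    have h2 : 2 ≤ M.charpoly.rootMultiplicity α := by
      rw [two_le_mult_iff, ← mulVecLin_shift']
      by_cases hc : ∀ u : Fin 4 → ℂ, N *ᵥ u = 0 → ∃ c : ℂ, u = c • v
      · -- kernel of N is spanned by v; find w with N w = v
        have hkerB : ∀ u : Fin 4 → ℂ, (Y - α • X) *ᵥ u = 0 ↔ N *ᵥ u = 0 := by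
          intro u
          rw [← key, ← Matrix.mulVec_mulVec]
          constructor
          · intro h; exact hXinj _ h
          · intro h; rw [h, Matrix.mulVec_zero]
        -- range of B is the hyperplane v᜔
        obtain ⟨w, hw⟩ : ∃ w, (Y - α • X) *ᵥ w = X *ᵥ v := by
          refine exists_preimage_of_symm _ (hB α) v hv ?_ ?_ _ hq1
          · exact (hkerB v).mpr hNv
          · intro u hu
            exact hc u ((hkerB u).mp hu)
        have hNw : N *ᵥ w = v := by
          apply sub_eq_zero.mp
          apply hXinj
          rw [Matrix.mulVec_sub, Matrix.mulVec_mulVec, key, hw, sub_self]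
        have hwv : LinearIndependent ℂ ![v, w] := by
          rw [LinearIndependent.pair_iff]
          intro s t hst
          have h1 : N *ᵥ (s • v + t • w) = 0 := by rw [hst, Matrix.mulVec_zero]
          rw [Matrix.mulVec_add, Matrix.mulVec_smul, Matrix.mulVec_smul, hNv, hNw,
            smul_zero, zero_add] at h1
          have ht : t = 0 := by
            rcases smul_eq_zero.mp h1 with h | h
            · exact h
            · exact absurd h hv
          subst ht
          simp only [zero_smul, add_zero] at hst
          rcases smul_eq_zero.mp hst with h | h
          · exact ⟨h, rfl⟩
          · exact absurd h hv
        apply two_le_finrank_of_pair _ ((mem_ker_sq N v).mpr (by rw [hNv, Matrix.mulVec_zero]))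
          ((mem_ker_sq N w).mpr (by rw [hNw, hNv])) hwv
      · push_neg at hc
        obtain ⟨u, hu0, hu⟩ := hc
        have hvu : LinearIndependent ℂ ![v, u] := by
          rw [LinearIndependent.pair_iff]
          intro s t hst
          have ht : t = 0 := by
            by_contra ht
            apply hu (t⁻¹ * (-s))
            have h1 : t • u = (-s) • v := by
              rw [neg_smul]
              exact eq_neg_of_add_eq_zero_right hst
            calc u = t⁻¹ • (t • u) := (inv_smul_smul₀ ht u).symm
              _ = (t⁻¹ * (-s)) • v := by rw [h1, smul_smul]
          subst ht
          simp only [zero_smul, add_zero] at hst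
          rcases smul_eq_zero.mp hst with h | h
          · exact ⟨h, rfl⟩
          · exact absurd h hv
        apply two_le_finrank_of_pair _ ((mem_ker_sq N v).mpr (by rw [hNv, Matrix.mulVec_zero]))
          ((mem_ker_sq N u).mpr (by rw [hu0, Matrix.mulVec_zero])) hvu
    have := hmult α
    omega
  · -- smooth → no multiple root
    intro hsmooth α
    by_contra hgt
    push_neg at hgt
    have h2 : 2 ≤ M.charpoly.rootMultiplicity α := hgt
    rw [two_le_mult_iff, ← mulVecLin_shift'] at h2
    set N : Matrix (Fin 4) (Fin 4) ℂ := M - α • 1 with hN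
    -- from N *ᵥ v = 0 we get Y *ᵥ v = α • X *ᵥ v
    have hNY : ∀ v : Fin 4 → ℂ, N *ᵥ v = 0 → Y *ᵥ v = α • (X *ᵥ v) := by
      intro v hv
      have : (Y - α • X) *ᵥ v = 0 := by
        rw [← key, ← Matrix.mulVec_mulVec, hv, Matrix.mulVec_zero]
      rw [Matrix.sub_mulVec, sub_eq_zero, Matrix.smul_mulVec] at this
      exact this
    have main : ∀ v : Fin 4 → ℂ, v ≠ 0 → N *ᵥ v = 0 → v ⬝ᵥ (X *ᵥ v) = 0 → False := by
      intro v hv hNv hq1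
      have hYv := hNY v hNv
      have hq2 : v ⬝ᵥ (Y *ᵥ v) = 0 := by
        rw [hYv, dotProduct_smul, hq1, smul_zero]
      have hind := hsmooth v hv hq1 hq2
      rw [LinearIndependent.pair_iff] at hind
      have := hind α (-1) (by rw [neg_smul, one_smul, ← hYv, add_neg_cancel])
      exact one_ne_zero (neg_eq_zero.mp this.2)
    by_cases hc : ∀ x : Fin 4 → ℂ, N *ᵥ (N *ᵥ x) = 0 → N *ᵥ x = 0
    · -- kernel of N² equals kernel of N : find two independent kernel vectors
      obtain ⟨x, y, hxm, hym, hxy⟩ := exists_pair_of_two_le_finrank _ h2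
      have hx0 : N *ᵥ x = 0 := hc x ((mem_ker_sq N x).mp hxm)
      have hy0 : N *ᵥ y = 0 := hc y ((mem_ker_sq N y).mp hym)
      obtain ⟨v, hv, hq1, a, b, hvab⟩ := exists_isotropic X hxy
      have hNv : N *ᵥ v = 0 := by
        rw [hvab, Matrix.mulVec_add, Matrix.mulVec_smul, Matrix.mulVec_smul, hx0, hy0,
          smul_zero, smul_zero, add_zero]
      exact main v hv hNv hq1
    · push_neg at hc
      obtain ⟨w, hw2, hw1⟩ := hc
      set v := N *ᵥ w with hvdef
      have hNv : N *ᵥ v = 0 := hw2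
      have hq1 : v ⬝ᵥ (X *ᵥ v) = 0 := by
        rw [hvdef, dot_shift (hNTX α), Matrix.mulVec_mulVec, ← hN, ← Matrix.mulVec_mulVec,
          hw2, Matrix.mulVec_zero, dotProduct_zero]
      exact main v hw1 hNv hq1
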